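/- Let W be an affine subspace of ℝ^n defined over ℚ (i.e. cut out by finitely many linear equations with rational coefficients) and let θ ∈ W be a point whose smallest containing rational affine subspace is W itself. Suppose θ has at least one irrational coordinate, say coordinate j. Then for every η > 0 and every positive integer r, there exist a point φ ∈ W with all coordinates rational and a positive integer k such that kφ/r ∈ ℤ^n (i.e. all coordinates of kφ/r are integers), ‖φ − θ‖_∞ < η, and φ_j > θ_j. -/

import Mathlib

set_option maxHeartbeats 1000000

/-- Diophantine approximation step of Theorem 7.1: let `W ⊆ ℝ^n` be an affine
subspace cut out by finitely many linear equations with rational coefficients, and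
let `θ ∈ W` be a point whose smallest containing rational affine subspace is `W`
itself (every rational affine equation satisfied by `θ` holds on all of `W`).
Suppose the coordinate `θ_j` is irrational.  Then for every `η > 0` and every
positive integer `r` there are a rational point `φ ∈ W` and a positive integer `k`
with `kφ/r` integral, `‖φ − θ‖_∞ < η` and `φ_j > θ_j`. -/
theorem diophantine_approximation_step (n : ℕ)
    (s : Finset ((Fin n → ℚ) × ℚ)) (W : Set (Fin n → ℝ))
    (hW : W = {x | ∀ p ∈ s, ∑ i, (p.1 i : ℝ) * x i = (p.2 : ℝ)})
    (θ : Fin n → ℝ) (hθ : θ ∈ W)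
    (hmin : ∀ (a : Fin n → ℚ) (c : ℚ), (∑ i, (a i : ℝ) * θ i = (c : ℝ)) →
      ∀ x ∈ W, ∑ i, (a i : ℝ) * x i = (c : ℝ))
    (j : Fin n) (hirr : Irrational (θ j))
    (η : ℝ) (hη : 0 < η) (r : ℕ) (hr : 0 < r) :
    ∃ (φ : Fin n → ℝ) (k : ℕ), 0 < k ∧ φ ∈ W ∧
      (∀ i, ∃ q : ℚ, φ i = (q : ℝ)) ∧
      (∀ i, ∃ z : ℤ, (k : ℝ) * φ i / (r : ℝ) = (z : ℝ)) ∧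
      (∀ i, |φ i - θ i| < η) ∧
      θ j < φ j := by
  classical
  -- the ℚ-span of 1 and the coordinates of θ
  set M : Submodule ℚ ℝ := Submodule.span ℚ (insert 1 (Set.range θ)) with hMdef
  haveI hfin : FiniteDimensional ℚ M :=
    FiniteDimensional.span_of_finite ℚ ((Set.finite_range θ).insert 1)
  have h1 : (1:ℝ) ∈ M := Submodule.subset_span (Set.mem_insert _ _)
  have hθM : ∀ i, θ i ∈ M := fun i =>
    Submodule.subset_span (Set.mem_insert_of_mem _ ⟨i, rfl⟩)
  set one : M := ⟨1, h1⟩ with hone_def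
  have hone : one ≠ 0 := by
    intro h
    have : (1:ℝ) = 0 := congrArg Subtype.val h
    exact one_ne_zero this
  have hli : LinearIndepOn ℚ id ({one} : Set M) :=
    (linearIndepOn_singleton_iff ℚ).mpr hone
  set ι := hli.extend (Set.subset_univ ({one} : Set M)) with hι
  set B : Module.Basis ι ℚ M := Module.Basis.extend hli with hB
  haveI : Fintype ι := FiniteDimensional.fintypeBasisIndex B
  have hone_mem : one ∈ hli.extend (Set.subset_univ _) :=
    hli.subset_extend _ rfl
  set i0 : ι := ⟨one, hone_mem⟩ with hi0
  have hBi0 : B i0 = one := Module.Basis.extend_apply_self hli i0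
  -- coordinates of θ and real values of the basis
  set c : Fin n → ι → ℚ := fun i m => B.repr ⟨θ i, hθM i⟩ m with hc
  set β : ι → ℝ := fun m => ((B m : M) : ℝ) with hβdef
  have hβi0 : β i0 = 1 := by rw [hβdef]; simp only [hBi0]; rfl
  have hβ : ∀ i, θ i = ∑ m, (c i m : ℝ) * β m := by
    intro i
    have h := congrArg (M.subtype) (B.sum_repr ⟨θ i, hθM i⟩)
    rw [map_sum] at h
    simp only [map_smul, Submodule.subtype_apply, Rat.smul_def] at h
    exact h.symm
  -- key orthogonality: for each relation (a, cc) of θ, the coefficients vanish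
  have hkey : ∀ p ∈ s, ∀ m : ι,
      ∑ i, p.1 i * c i m = if m = i0 then p.2 else 0 := by
    intro p hp m
    have hrel : ∑ i, (p.1 i : ℝ) * θ i = (p.2 : ℝ) := by
      rw [hW] at hθ; exact hθ p hp
    have hsum : (∑ i, p.1 i • (⟨θ i, hθM i⟩ : M)) = p.2 • one := by
      apply Subtype.ext
      push_cast [Submodule.coe_sum]
      simp only [Rat.smul_def, smul_eq_mul, mul_one]
      exact hrel.trans (mul_one _).symm
    have := congrArg (fun x => B.repr x m) hsum
    simp only [map_sum, map_smul, Finsupp.coe_smul, Finsupp.smul_apply,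
      Finsupp.coe_finset_sum, Finset.sum_apply] at this
    rw [← hBi0, B.repr_self] at this
    simpa [smul_eq_mul, Finsupp.single_apply, eq_comm] using this
  -- any rational reparametrization with t i0 = 1 lies in W
  have hmem : ∀ t : ι → ℝ, t i0 = 1 →
      (fun i => ∑ m, (c i m : ℝ) * t m) ∈ W := by
    intro t ht
    rw [hW]
    intro p hp
    have : ∑ i, (p.1 i : ℝ) * ∑ m, (c i m : ℝ) * t m
        = ∑ m, (∑ i, (p.1 i : ℝ) * (c i m : ℝ)) * t m := by
      simp_rw [Finset.mul_sum]
      rw [Finset.sum_comm]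
      refine Finset.sum_congr rfl fun m _ => ?_
      rw [Finset.sum_mul]
      exact Finset.sum_congr rfl fun i _ => by ring
    rw [this]
    have hco : ∀ m : ι, (∑ i, (p.1 i : ℝ) * (c i m : ℝ))
        = if m = i0 then (p.2 : ℝ) else 0 := by
      intro m
      have := hkey p hp m
      have h2 := congrArg (fun q : ℚ => (q : ℝ)) this
      push_cast at h2
      rw [h2]
      split <;> simp
    simp only [hco]
    rw [Finset.sum_eq_single i0]
    · simp [ht]
    · intro m _ hm; simp [hm]
    · intro h; exact absurd (Finset.mem_univ i0) h
  -- there is a basis coordinate m ≠ i0 with c j m ≠ 0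
  have hex : ∃ m : ι, m ≠ i0 ∧ c j m ≠ 0 := by
    by_contra h
    push_neg at h
    apply hirr
    refine ⟨c j i0, ?_⟩
    rw [hβ j]
    rw [Finset.sum_eq_single i0]
    · rw [hβi0]; ring
    · intro m _ hm
      rw [h m hm]; simp
    · intro hm; exact absurd (Finset.mem_univ i0) hm
  obtain ⟨m0, hm0, hcm0⟩ := hex
  -- choose the perturbation size
  set C : ℝ := (∑ i, ∑ m, |(c i m : ℝ)|) + 1 with hC
  have hC1 : (∑ i, ∑ m, |(c i m : ℝ)|) + 1 ≤ C := le_of_eq rfl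
  have hCpos : 0 < C := by
    have : (0:ℝ) ≤ ∑ i, ∑ m, |(c i m : ℝ)| :=
      Finset.sum_nonneg fun i _ => Finset.sum_nonneg fun m _ => abs_nonneg _
    linarith
  set δ : ℝ := η / C with hδdef
  have hδ : 0 < δ := div_pos hη hCpos
  -- choose rational approximations of the basis values
  have hq : ∀ m : ι, ∃ q : ℚ, |(q:ℝ) - β m| < δ ∧
      0 ≤ (c j m : ℝ) * ((q:ℝ) - β m) ∧
      (m ≠ i0 → c j m ≠ 0 → 0 < (c j m : ℝ) * ((q:ℝ) - β m)) ∧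
      (m = i0 → (q:ℝ) = 1) := by
    intro m
    by_cases hm : m = i0
    · refine ⟨1, ?_, ?_, fun h => absurd hm h, fun _ => by norm_num⟩
      · rw [hm, hβi0]; simpa using hδ
      · rw [hm, hβi0]; simp
    · by_cases hcs : 0 ≤ (c j m : ℝ)
      · obtain ⟨q, hq1, hq2⟩ := exists_rat_btwn (show β m < β m + δ by linarith)
        refine ⟨q, ?_, ?_, ?_, fun h => absurd h hm⟩
        · rw [abs_lt]; constructor <;> linarith
        · exact mul_nonneg hcs (by linarith)
        · intro _ hc0
          have : 0 < (c j m : ℝ) := by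
            rcases lt_or_eq_of_le hcs with h | h
            · exact h
            · exact absurd (by exact_mod_cast h.symm) hc0
          exact mul_pos this (by linarith)
      · push_neg at hcs
        obtain ⟨q, hq1, hq2⟩ := exists_rat_btwn (show β m - δ < β m by linarith)
        refine ⟨q, ?_, ?_, ?_, fun h => absurd h hm⟩
        · rw [abs_lt]; constructor <;> linarith
        · nlinarith
        · intro _ _
          exact mul_pos_of_neg_of_neg hcs (by linarith)
  choose q hq1 hq2 hq3 hq4 using hq
  -- the approximating point
  set φ : Fin n → ℝ := fun i => ∑ m, (c i m : ℝ) * (q m : ℝ) with hφ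
  set ρ : Fin n → ℚ := fun i => ∑ m, c i m * q m with hρ
  have hφρ : ∀ i, φ i = (ρ i : ℝ) := by
    intro i; rw [hφ, hρ]; push_cast; rfl
  set D : ℕ := ∏ i, (ρ i).den with hD
  have hDpos : 0 < D := Finset.prod_pos fun i _ => (ρ i).pos
  refine ⟨φ, r * D, ?_, ?_, ?_, ?_, ?_, ?_⟩
  · exact Nat.mul_pos hr hDpos
  · exact hmem (fun m => (q m : ℝ)) (hq4 i0 rfl)
  · exact fun i => ⟨ρ i, hφρ i⟩
  · intro i
    have hdvd : ((ρ i).den : ℤ) ∣ (D : ℤ) := by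
      exact_mod_cast Finset.dvd_prod_of_mem (fun i => (ρ i).den) (Finset.mem_univ i)
    obtain ⟨e, he⟩ := hdvd
    refine ⟨(ρ i).num * e, ?_⟩
    have hden : ((ρ i).den : ℚ) ≠ 0 := by
      exact_mod_cast (ρ i).den_nz
    have hQ : (D : ℚ) * ρ i = (((ρ i).num * e : ℤ) : ℚ) := by
      have h3 : ((ρ i).den : ℚ) * ρ i = ((ρ i).num : ℚ) := Rat.den_mul_eq_num (ρ i)
      have hD' : (D : ℚ) = ((ρ i).den : ℚ) * (e : ℚ) := by exact_mod_cast he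
      push_cast
      rw [hD', mul_comm (((ρ i).den : ℚ)) ((e : ℚ)), mul_assoc, h3]
      ring
    have hrne : (r : ℝ) ≠ 0 := by positivity
    have h5 : ((r * D : ℕ) : ℝ) * ((ρ i : ℚ) : ℝ) / (r : ℝ) = ((D : ℕ) : ℝ) * ((ρ i : ℚ) : ℝ) := by
      push_cast
      field_simp
    rw [hφρ i, h5]
    exact_mod_cast hQ
  · intro i
    have : φ i - θ i = ∑ m, (c i m : ℝ) * ((q m : ℝ) - β m) := by
      rw [hφ, hβ i, ← Finset.sum_sub_distrib]
      refine Finset.sum_congr rfl fun m _ => by ring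
    rw [this]
    calc |∑ m, (c i m : ℝ) * ((q m : ℝ) - β m)|
        ≤ ∑ m, |(c i m : ℝ) * ((q m : ℝ) - β m)| := Finset.abs_sum_le_sum_abs _ _
      _ ≤ ∑ m, |(c i m : ℝ)| * δ := by
          refine Finset.sum_le_sum fun m _ => ?_
          rw [abs_mul]
          exact mul_le_mul_of_nonneg_left (le_of_lt (hq1 m)) (abs_nonneg _)
      _ = (∑ m, |(c i m : ℝ)|) * δ := by rw [Finset.sum_mul]
      _ < C * δ := by
          apply mul_lt_mul_of_pos_right _ hδ
          have hle : (∑ m, |(c i m : ℝ)|) ≤ ∑ i', ∑ m, |(c i' m : ℝ)| :=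
            Finset.single_le_sum (f := fun i' => ∑ m, |(c i' m : ℝ)|)
              (fun i' _ => Finset.sum_nonneg fun m _ => abs_nonneg _)
              (Finset.mem_univ i)
          linarith
      _ = η := by rw [hδdef]; field_simp
  · have : φ j - θ j = ∑ m, (c j m : ℝ) * ((q m : ℝ) - β m) := by
      rw [hφ, hβ j, ← Finset.sum_sub_distrib]
      refine Finset.sum_congr rfl fun m _ => by ring
    have hpos : 0 < ∑ m, (c j m : ℝ) * ((q m : ℝ) - β m) :=
      Finset.sum_pos' (fun m _ => hq2 m) ⟨m0, Finset.mem_univ m0, hq3 m0 hm0 hcm0⟩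
    linarith
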